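/- Soundness of the Reluplex calculus, unsatisfiable case: if φ is a conjunction of linear atoms and ReLU atoms and there exists a refutation from φ (a Reluplex derivation from the initial configuration of φ ending in a derivation tree all of whose leaves are UNSAT), then φ is unsatisfiable, i.e., no real assignment satisfies every atom of φ. -/

import Mathlib

open scoped Classical

/-- A (non-distinguished) Reluplex configuration over the variable set `V`:
basic variables, tableau coefficients, lower/upper bounds (possibly infinite),
current assignment, and the set of ReLU pairs. -/
structure Config (V : Type*) where
  basic : Finset V
  T : V → V → ℝ
  l : V → EReal
  u : V → EReal
  α : V → ℝ
  R : Finset (V × V)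

namespace Config

variable {V : Type*} [Fintype V] [DecidableEq V]

/-- The right-hand side `Σ_{j ∉ basic} T i j * β j` of the tableau row of `i`. -/
noncomputable def rowSum (c : Config V) (i : V) (β : V → ℝ) : ℝ :=
  ∑ j ∈ Finset.univ.filter (fun j => j ∉ c.basic), c.T i j * β j

/-- An assignment `β` satisfies all equations of the tableau of `c`. -/
def SatTab (c : Config V) (β : V → ℝ) : Prop :=
  ∀ i ∈ c.basic, β i = c.rowSum i β

/-- An assignment `β` respects all the lower and upper bounds of `c`. -/
def InBounds (c : Config V) (β : V → ℝ) : Prop :=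
  ∀ x, c.l x ≤ (β x : EReal) ∧ (β x : EReal) ≤ c.u x

/-- `slack⁺(x_i)`. -/
def slackPos (c : Config V) (i : V) : Set V :=
  { j | j ∉ c.basic ∧
      ((0 < c.T i j ∧ (c.α j : EReal) < c.u j) ∨ (c.T i j < 0 ∧ c.l j < (c.α j : EReal))) }

/-- `slack⁻(x_i)`. -/
def slackNeg (c : Config V) (i : V) : Set V :=
  { j | j ∉ c.basic ∧
      ((c.T i j < 0 ∧ (c.α j : EReal) < c.u j) ∨ (0 < c.T i j ∧ c.l j < (c.α j : EReal))) }

/-- The `pivot(T,i,j)` operation: `x_i` leaves the basis and `x_j` enters it;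
the row of `x_i` is solved for `x_j`, and the result is substituted for `x_j`
in all other rows. -/
noncomputable def pivotConfig (c : Config V) (i j : V) : Config V :=
  { c with
    basic := insert j (c.basic.erase i)
    T := fun r k =>
      if r = j then (if k = i then 1 / c.T i j else - (c.T i k / c.T i j))
      else (if k = i then c.T r j / c.T i j
            else c.T r k - c.T r j * c.T i k / c.T i j) }

/-- The `update(α, x_j, δ)` operation for a non-basic variable `x_j`. -/
noncomputable def updateConfig (c : Config V) (j : V) (δ : ℝ) : Config V :=
  { c with
    α := fun k =>
      if k = j then c.α k + δ
      else if k ∈ c.basic then c.α k + δ * c.T k j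
      else c.α k }

/-- The candidate tighter lower bound `Σ_{T i j>0} T i j * l j + Σ_{T i j<0} T i j * u j`. -/
noncomputable def derivedLower (c : Config V) (i : V) : EReal :=
  (∑ j ∈ Finset.univ.filter (fun j => j ∉ c.basic ∧ 0 < c.T i j),
      (c.T i j : EReal) * c.l j)
  + ∑ j ∈ Finset.univ.filter (fun j => j ∉ c.basic ∧ c.T i j < 0),
      (c.T i j : EReal) * c.u j

/-- The candidate tighter upper bound `Σ_{T i j>0} T i j * u j + Σ_{T i j<0} T i j * l j`. -/
noncomputable def derivedUpper (c : Config V) (i : V) : EReal :=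
  (∑ j ∈ Finset.univ.filter (fun j => j ∉ c.basic ∧ 0 < c.T i j),
      (c.T i j : EReal) * c.u j)
  + ∑ j ∈ Finset.univ.filter (fun j => j ∉ c.basic ∧ c.T i j < 0),
      (c.T i j : EReal) * c.l j

end Config

/-- A Reluplex configuration: either one of the distinguished symbols `SAT`, `UNSAT`,
or a tuple `⟨B, T, l, u, α, R⟩`. -/
inductive RConfig (V : Type*) where
  | SAT : RConfig V
  | UNSAT : RConfig V
  | node : Config V → RConfig V

/-- One application of a Reluplex derivation rule to the configuration `c`,
producing the given list of child configurations. -/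
inductive Step {V : Type*} [Fintype V] [DecidableEq V] :
    Config V → List (RConfig V) → Prop
  | pivot1 (c : Config V) (i j : V) (hi : i ∈ c.basic)
      (hlo : (c.α i : EReal) < c.l i) (hj : j ∈ c.slackPos i) :
      Step c [RConfig.node (c.pivotConfig i j)]
  | pivot2 (c : Config V) (i j : V) (hi : i ∈ c.basic)
      (hhi : c.u i < (c.α i : EReal)) (hj : j ∈ c.slackNeg i) :
      Step c [RConfig.node (c.pivotConfig i j)]
  | update (c : Config V) (j : V) (δ : ℝ) (hj : j ∉ c.basic)
      (hviol : (c.α j : EReal) < c.l j ∨ c.u j < (c.α j : EReal))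
      (hlo : c.l j ≤ ((c.α j + δ : ℝ) : EReal))
      (hhi : ((c.α j + δ : ℝ) : EReal) ≤ c.u j) :
      Step c [RConfig.node (c.updateConfig j δ)]
  | failure (c : Config V) (i : V) (hi : i ∈ c.basic)
      (h : ((c.α i : EReal) < c.l i ∧ c.slackPos i = ∅) ∨
           (c.u i < (c.α i : EReal) ∧ c.slackNeg i = ∅)) :
      Step c [RConfig.UNSAT]
  | updateB (c : Config V) (i j : V) (hR : (i, j) ∈ c.R) (hi : i ∉ c.basic)
      (hne : c.α j ≠ max 0 (c.α i)) (hpos : 0 ≤ c.α j) :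
      Step c [RConfig.node (c.updateConfig i (c.α j - c.α i))]
  | updateF (c : Config V) (i j : V) (hR : (i, j) ∈ c.R) (hj : j ∉ c.basic)
      (hne : c.α j ≠ max 0 (c.α i)) :
      Step c [RConfig.node (c.updateConfig j (max 0 (c.α i) - c.α j))]
  | pivotForRelu (c : Config V) (i j : V) (hi : i ∈ c.basic)
      (hrel : ∃ x, (i, x) ∈ c.R ∨ (x, i) ∈ c.R) (hj : j ∉ c.basic)
      (hT : c.T i j ≠ 0) :
      Step c [RConfig.node (c.pivotConfig i j)]
  | reluSplit (c : Config V) (i j : V) (hR : (i, j) ∈ c.R)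
      (hl : c.l i < 0) (hu : 0 < c.u i) :
      Step c [RConfig.node { c with u := fun k => if k = i then 0 else c.u k },
              RConfig.node { c with l := fun k => if k = i then 0 else c.l k }]
  | reluSuccess (c : Config V) (hb : c.InBounds c.α)
      (hr : ∀ p ∈ c.R, c.α p.2 = max 0 (c.α p.1)) :
      Step c [RConfig.SAT]
  | deriveLowerBound (c : Config V) (i : V) (hi : i ∈ c.basic)
      (h : c.l i < c.derivedLower i) :
      Step c [RConfig.node { c with l := fun k => if k = i then c.derivedLower i else c.l k }]
  | deriveUpperBound (c : Config V) (i : V) (hi : i ∈ c.basic)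
      (h : c.derivedUpper i < c.u i) :
      Step c [RConfig.node { c with u := fun k => if k = i then c.derivedUpper i else c.u k }]

/-- Derivation trees: trees of Reluplex configurations. -/
inductive DTree (V : Type*) where
  | leaf : RConfig V → DTree V
  | node : RConfig V → List (DTree V) → DTree V

namespace DTree

variable {V : Type*}

/-- The configuration at the root of a derivation tree. -/
def root : DTree V → RConfig V
  | DTree.leaf s => s
  | DTree.node s _ => s

/-- `Mem s t`: the configuration `s` appears (as some node) in the tree `t`. -/
inductive Mem : RConfig V → DTree V → Prop
  | leaf (s : RConfig V) : Mem s (DTree.leaf s)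
  | root (s : RConfig V) (ts : List (DTree V)) : Mem s (DTree.node s ts)
  | child {s s' : RConfig V} {t : DTree V} {ts : List (DTree V)}
      (h : Mem s t) (ht : t ∈ ts) : Mem s (DTree.node s' ts)

/-- `LeafMem s t`: the configuration `s` appears as a leaf of the tree `t`. -/
inductive LeafMem : RConfig V → DTree V → Prop
  | leaf (s : RConfig V) : LeafMem s (DTree.leaf s)
  | child {s s' : RConfig V} {t : DTree V} {ts : List (DTree V)}
      (h : LeafMem s t) (ht : t ∈ ts) : LeafMem s (DTree.node s' ts)

/-- `Sub t t'`: `t` is a subtree of `t'`. -/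
inductive Sub : DTree V → DTree V → Prop
  | refl (t : DTree V) : Sub t t
  | child {t t' : DTree V} {s : RConfig V} {ts : List (DTree V)}
      (h : Sub t t') (ht : t' ∈ ts) : Sub t (DTree.node s ts)

end DTree

/-- `Expand D D'`: `D'` is obtained from `D` by applying exactly one derivation
rule to one of the leaves of `D`. -/
inductive Expand {V : Type*} [Fintype V] [DecidableEq V] : DTree V → DTree V → Prop
  | here {c : Config V} {ts : List (RConfig V)} (h : Step c ts) :
      Expand (DTree.leaf (RConfig.node c)) (DTree.node (RConfig.node c) (ts.map DTree.leaf))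
  | child {s : RConfig V} {pre post : List (DTree V)} {t t' : DTree V}
      (h : Expand t t') :
      Expand (DTree.node s (pre ++ t :: post)) (DTree.node s (pre ++ t' :: post))

/-- `IsDerivation s0 m D`: `D 0, D 1, …, D m` is a Reluplex derivation starting
from the derivation tree consisting of the single node `s0`. -/
def IsDerivation {V : Type*} [Fintype V] [DecidableEq V]
    (s0 : Config V) (m : ℕ) (D : ℕ → DTree V) : Prop :=
  D 0 = DTree.leaf (RConfig.node s0) ∧ ∀ i < m, Expand (D i) (D (i + 1))

/-- The relation symbol of a linear atom: `=`, `≤` or `≥`. -/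
inductive LinRel where
  | eq : LinRel
  | le : LinRel
  | ge : LinRel

/-- A linear atom `Σ_j coeff j * x_j ⋈ d` over the variables `Fin n`. -/
structure LinAtom (n : ℕ) where
  coeff : Fin n → ℝ
  rel : LinRel
  d : ℝ

/-- The assignment `β` satisfies the linear atom `a`. -/
def LinAtom.Holds {n : ℕ} (a : LinAtom n) (β : Fin n → ℝ) : Prop :=
  match a.rel with
  | LinRel.eq => ∑ j, a.coeff j * β j = a.d
  | LinRel.le => ∑ j, a.coeff j * β j ≤ a.d
  | LinRel.ge => a.d ≤ ∑ j, a.coeff j * β j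

/-- A conjunction `φ` of linear atoms and ReLU atoms `ReLU(x, y)` over the
variables `Fin n`. -/
structure Phi (n : ℕ) where
  lin : List (LinAtom n)
  relu : Finset (Fin n × Fin n)

/-- The assignment `β` satisfies every atom of `φ`. -/
def Phi.Sat {n : ℕ} (φ : Phi n) (β : Fin n → ℝ) : Prop :=
  (∀ a ∈ φ.lin, a.Holds β) ∧ ∀ p ∈ φ.relu, β p.2 = max 0 (β p.1)

/-- `φ` is satisfiable: some real assignment satisfies every atom of `φ`. -/
def Phi.Satisfiable {n : ℕ} (φ : Phi n) : Prop :=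
  ∃ β : Fin n → ℝ, φ.Sat β

/-- The initial configuration of `φ`: for the `a`-th linear atom a fresh basic
variable `Sum.inr a` is introduced, with tableau row `Σ_j coeff j * x_j` and with
`d` as its corresponding bound(s); all original variables `Sum.inl j` are
non-basic and unbounded, except that forward-facing ReLU variables get lower
bound `0`; the assignment is identically `0`; and `R` consists of the ReLU atoms. -/
noncomputable def Phi.init {n : ℕ} (φ : Phi n) :
    Config (Fin n ⊕ Fin φ.lin.length) :=
  { basic := Finset.univ.filter (fun v => v.isRight)
    T := fun r k =>
      match r, k with
      | Sum.inr a, Sum.inl j => (φ.lin.get a).coeff j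
      | _, _ => 0
    l := fun v =>
      match v with
      | Sum.inl j => if ∃ x, (x, j) ∈ φ.relu then (0 : EReal) else ⊥
      | Sum.inr a =>
        match (φ.lin.get a).rel with
        | LinRel.eq => ((φ.lin.get a).d : EReal)
        | LinRel.ge => ((φ.lin.get a).d : EReal)
        | LinRel.le => ⊥
    u := fun v =>
      match v with
      | Sum.inl _ => ⊤
      | Sum.inr a =>
        match (φ.lin.get a).rel with
        | LinRel.eq => ((φ.lin.get a).d : EReal)
        | LinRel.le => ((φ.lin.get a).d : EReal)
        | LinRel.ge => ⊤
    α := fun _ => 0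
    R := φ.relu.image (fun p => (Sum.inl p.1, Sum.inl p.2)) }

section Soundness

open Finset

variable {V : Type*} [Fintype V] [DecidableEq V]

private lemma ereal_coe_sum {ι : Type*} (s : Finset ι) (f : ι → ℝ) :
    ((∑ i ∈ s, f i : ℝ) : EReal) = ∑ i ∈ s, (f i : EReal) := by
  induction s using Finset.induction with
  | empty => simp
  | insert _ _ h ih => rw [Finset.sum_insert h, Finset.sum_insert h, EReal.coe_add, ih]

namespace Config

/-- The full invariant carried along a derivation: the current assignment
satisfies the tableau, and the fixed external solution `β` satisfies the
tableau, the bounds and the ReLU constraints. -/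
def Good (c : Config V) (β : V → ℝ) : Prop :=
  c.SatTab c.α ∧ c.SatTab β ∧ c.InBounds β ∧ ∀ p ∈ c.R, β p.2 = max 0 (β p.1)

lemma pivot_nonbasic (c : Config V) {i j : V} (hi : i ∈ c.basic) (hj : j ∉ c.basic) :
    Finset.univ.filter (fun k => k ∉ (c.pivotConfig i j).basic)
      = insert i ((Finset.univ.filter (fun k => k ∉ c.basic)).erase j) := by
  have hij : i ≠ j := fun h => hj (h ▸ hi)
  ext k
  simp only [pivotConfig, mem_filter, mem_univ, true_and, mem_insert, mem_erase, not_or, not_and]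
  by_cases hk : k = i
  · subst hk; simp [hij, hi]
  · by_cases hkj : k = j
    · subst hkj; simp [Ne.symm hij, hj, hk]
    · tauto

lemma pivot_satTab (c : Config V) {i j : V} (hi : i ∈ c.basic) (hj : j ∉ c.basic)
    (hT : c.T i j ≠ 0) {γ : V → ℝ} (h : c.SatTab γ) :
    (c.pivotConfig i j).SatTab γ := by
  have hij : i ≠ j := fun h' => hj (h' ▸ hi)
  set S : Finset V := Finset.univ.filter (fun k => k ∉ c.basic) with hS
  have hjS : j ∈ S := by simp [hS, hj]
  have hiS : i ∉ S := by simp [hS, hi]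
  have hie : i ∉ S.erase j := fun h' => hiS (Finset.mem_of_mem_erase h')
  have hSn : Finset.univ.filter (fun k => k ∉ (c.pivotConfig i j).basic)
      = insert i (S.erase j) := pivot_nonbasic c hi hj
  have hgi : γ i = c.T i j * γ j + ∑ k ∈ S.erase j, c.T i k * γ k := by
    rw [h i hi]; unfold rowSum
    rw [← hS, ← Finset.add_sum_erase S _ hjS]
  intro r hr
  unfold rowSum
  rw [hSn, Finset.sum_insert hie]
  rcases Finset.mem_insert.1 hr with hrj | hre
  · have h1 : (c.pivotConfig i j).T r i = 1 / c.T i j := by simp [pivotConfig, hrj]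
    have h2 : ∀ k ∈ S.erase j, (c.pivotConfig i j).T r k * γ k
        = -(1 / c.T i j) * (c.T i k * γ k) := by
      intro k hk
      have hki : k ≠ i := fun e => hie (e ▸ hk)
      simp only [pivotConfig, if_pos hrj, if_neg hki]
      field_simp
    rw [Finset.sum_congr rfl h2, ← Finset.mul_sum, h1, hgi, hrj]
    field_simp
    ring
  · have hrne : r ≠ j := fun e => hj (e ▸ (Finset.mem_of_mem_erase hre))
    have hri : r ≠ i := (Finset.mem_erase.1 hre).1
    have hrb : r ∈ c.basic := (Finset.mem_erase.1 hre).2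
    have h1 : (c.pivotConfig i j).T r i = c.T r j / c.T i j := by
      simp [pivotConfig, hrne]
    have h2 : ∀ k ∈ S.erase j, (c.pivotConfig i j).T r k * γ k
        = c.T r k * γ k - (c.T r j / c.T i j) * (c.T i k * γ k) := by
      intro k hk
      have hki : k ≠ i := fun e => hie (e ▸ hk)
      simp only [pivotConfig, if_neg hrne, if_neg hki]
      ring
    have hgr : γ r = c.T r j * γ j + ∑ k ∈ S.erase j, c.T r k * γ k := by
      rw [h r hrb]; unfold rowSum
      rw [← hS, ← Finset.add_sum_erase S _ hjS]
    rw [Finset.sum_congr rfl h2, Finset.sum_sub_distrib, ← Finset.mul_sum, h1, hgi, hgr]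
    field_simp
    ring

lemma update_satTab (c : Config V) {j : V} (hj : j ∉ c.basic) (δ : ℝ)
    (h : c.SatTab c.α) : (c.updateConfig j δ).SatTab (c.updateConfig j δ).α := by
  intro r hr
  have hr' : r ∈ c.basic := hr
  have hrj : r ≠ j := fun e => hj (e ▸ hr')
  set S : Finset V := Finset.univ.filter (fun k => k ∉ c.basic) with hS
  have hjS : j ∈ S := by simp [hS, hj]
  show (c.updateConfig j δ).α r = ∑ k ∈ S, c.T r k * (c.updateConfig j δ).α k
  have hαr : (c.updateConfig j δ).α r = c.α r + δ * c.T r j := by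
    simp [updateConfig, hrj, hr']
  have hsum : ∑ k ∈ S, c.T r k * (c.updateConfig j δ).α k
      = c.T r j * (c.α j + δ) + ∑ k ∈ S.erase j, c.T r k * c.α k := by
    rw [← Finset.add_sum_erase S _ hjS]
    congr 1
    · simp [updateConfig]
    · refine Finset.sum_congr rfl fun k hk => ?_
      have hkj : k ≠ j := (Finset.mem_erase.1 hk).1
      have hkb : k ∉ c.basic := by
        have := (Finset.mem_erase.1 hk).2; rw [hS] at this
        simpa using this
      simp [updateConfig, hkj, hkb]
  have hold : c.α r = c.T r j * c.α j + ∑ k ∈ S.erase j, c.T r k * c.α k := by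
    rw [h r hr']; unfold rowSum
    rw [← hS, ← Finset.add_sum_erase S _ hjS]
  rw [hαr, hsum, hold]; ring

lemma failure_absurd (c : Config V) {β : V → ℝ} (hα : c.SatTab c.α) (hβ : c.SatTab β)
    (hb : c.InBounds β) (i : V) (hi : i ∈ c.basic)
    (h : ((c.α i : EReal) < c.l i ∧ c.slackPos i = ∅) ∨
         (c.u i < (c.α i : EReal) ∧ c.slackNeg i = ∅)) : False := by
  set S : Finset V := Finset.univ.filter (fun k => k ∉ c.basic) with hS
  rcases h with ⟨hlt, hsl⟩ | ⟨hlt, hsl⟩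
  · have hterm : ∀ k ∈ S, c.T i k * β k ≤ c.T i k * c.α k := by
      intro k hk
      have hkb : k ∉ c.basic := by rw [hS] at hk; simpa using hk
      have hnot : k ∉ c.slackPos i := by rw [hsl]; exact Set.notMem_empty k
      rw [slackPos, Set.mem_setOf_eq] at hnot
      push_neg at hnot
      rcases lt_trichotomy (c.T i k) 0 with hT | hT | hT
      · have h2 := (hnot hkb).2 hT
        have : (c.α k : EReal) ≤ (β k : EReal) := le_trans h2 (hb k).1
        exact mul_le_mul_of_nonpos_left (EReal.coe_le_coe_iff.1 this) (le_of_lt hT)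
      · simp [hT]
      · have h2 := (hnot hkb).1 hT
        have : (β k : EReal) ≤ (c.α k : EReal) := le_trans (hb k).2 h2
        exact mul_le_mul_of_nonneg_left (EReal.coe_le_coe_iff.1 this) (le_of_lt hT)
    have hle : β i ≤ c.α i := by
      rw [hβ i hi, hα i hi]
      exact Finset.sum_le_sum hterm
    have h1 : (β i : EReal) < c.l i := lt_of_le_of_lt (EReal.coe_le_coe_iff.2 hle) hlt
    exact absurd (hb i).1 (not_le.2 h1)
  · have hterm : ∀ k ∈ S, c.T i k * c.α k ≤ c.T i k * β k := by
      intro k hk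
      have hkb : k ∉ c.basic := by rw [hS] at hk; simpa using hk
      have hnot : k ∉ c.slackNeg i := by rw [hsl]; exact Set.notMem_empty k
      rw [slackNeg, Set.mem_setOf_eq] at hnot
      push_neg at hnot
      rcases lt_trichotomy (c.T i k) 0 with hT | hT | hT
      · have h2 := (hnot hkb).1 hT
        have : (β k : EReal) ≤ (c.α k : EReal) := le_trans (hb k).2 h2
        exact mul_le_mul_of_nonpos_left (EReal.coe_le_coe_iff.1 this) (le_of_lt hT)
      · simp [hT]
      · have h2 := (hnot hkb).2 hT
        have : (c.α k : EReal) ≤ (β k : EReal) := le_trans h2 (hb k).1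
        exact mul_le_mul_of_nonneg_left (EReal.coe_le_coe_iff.1 this) (le_of_lt hT)
    have hle : c.α i ≤ β i := by
      rw [hβ i hi, hα i hi]
      exact Finset.sum_le_sum hterm
    have h1 : c.u i < (β i : EReal) := lt_of_lt_of_le hlt (EReal.coe_le_coe_iff.2 hle)
    exact absurd (hb i).2 (not_le.2 h1)

end Config

end Soundness
section Soundness2

open Finset

variable {V : Type*} [Fintype V] [DecidableEq V]

namespace Config

private lemma coe_mul_le_of_pos {t : ℝ} (ht : 0 < t) {a : EReal} {b : ℝ}
    (h : a ≤ (b : EReal)) : (t : EReal) * a ≤ ((t * b : ℝ) : EReal) := by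
  rw [EReal.coe_mul]
  exact mul_le_mul_of_nonneg_left h (EReal.coe_nonneg.2 ht.le)

private lemma coe_mul_le_of_neg {t : ℝ} (ht : t < 0) {a : EReal} {b : ℝ}
    (h : (b : EReal) ≤ a) : (t : EReal) * a ≤ ((t * b : ℝ) : EReal) := by
  have h1 : ((t : ℝ) : EReal) = -((-t : ℝ) : EReal) := by
    rw [EReal.coe_neg, neg_neg]
  rw [EReal.coe_mul, h1, EReal.neg_mul, EReal.neg_mul, EReal.neg_le_neg_iff]
  exact mul_le_mul_of_nonneg_left h (EReal.coe_nonneg.2 (by linarith))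

private lemma le_coe_mul_of_pos {t : ℝ} (ht : 0 < t) {a : EReal} {b : ℝ}
    (h : (b : EReal) ≤ a) : ((t * b : ℝ) : EReal) ≤ (t : EReal) * a := by
  rw [EReal.coe_mul]
  exact mul_le_mul_of_nonneg_left h (EReal.coe_nonneg.2 ht.le)

private lemma le_coe_mul_of_neg {t : ℝ} (ht : t < 0) {a : EReal} {b : ℝ}
    (h : a ≤ (b : EReal)) : ((t * b : ℝ) : EReal) ≤ (t : EReal) * a := by
  have h1 : ((t : ℝ) : EReal) = -((-t : ℝ) : EReal) := by
    rw [EReal.coe_neg, neg_neg]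
  rw [EReal.coe_mul, h1, EReal.neg_mul, EReal.neg_mul, EReal.neg_le_neg_iff]
  exact mul_le_mul_of_nonneg_left h (EReal.coe_nonneg.2 (by linarith))

private lemma split_rowSum (c : Config V) (i : V) (γ : V → ℝ) :
    c.rowSum i γ
      = (∑ j ∈ Finset.univ.filter (fun j => j ∉ c.basic ∧ 0 < c.T i j), c.T i j * γ j)
        + ∑ j ∈ Finset.univ.filter (fun j => j ∉ c.basic ∧ c.T i j < 0), c.T i j * γ j := by
  set P := Finset.univ.filter (fun j => j ∉ c.basic ∧ 0 < c.T i j) with hP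
  set N := Finset.univ.filter (fun j => j ∉ c.basic ∧ c.T i j < 0) with hN
  have hdisj : Disjoint P N := by
    rw [Finset.disjoint_left]
    intro a ha ha'
    rw [hP, mem_filter] at ha
    rw [hN, mem_filter] at ha'
    exact absurd ha.2.2 (asymm ha'.2.2)
  have hsub : P ∪ N ⊆ Finset.univ.filter (fun j => j ∉ c.basic) := by
    intro a ha
    rcases Finset.mem_union.1 ha with h | h
    · rw [hP, mem_filter] at h; simp [h.2.1]
    · rw [hN, mem_filter] at h; simp [h.2.1]
  rw [rowSum, ← Finset.sum_union hdisj]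
  refine (Finset.sum_subset hsub fun k hk hk' => ?_).symm
  have hkb : k ∉ c.basic := by simpa using (Finset.mem_filter.1 hk).2
  have h0 : c.T i k = 0 := by
    by_contra h0
    rcases lt_or_gt_of_ne h0 with h | h
    · exact hk' (Finset.mem_union_right _ (by rw [hN, mem_filter]; exact ⟨mem_univ k, hkb, h⟩))
    · exact hk' (Finset.mem_union_left _ (by rw [hP, mem_filter]; exact ⟨mem_univ k, hkb, h⟩))
  rw [h0, zero_mul]

lemma derivedLower_le (c : Config V) {β : V → ℝ} (ht : c.SatTab β) (hb : c.InBounds β)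
    (i : V) (hi : i ∈ c.basic) : c.derivedLower i ≤ (β i : EReal) := by
  rw [ht i hi, split_rowSum c i β, EReal.coe_add, ereal_coe_sum, ereal_coe_sum]
  unfold derivedLower
  refine add_le_add (Finset.sum_le_sum fun j hj => ?_) (Finset.sum_le_sum fun j hj => ?_)
  · exact coe_mul_le_of_pos (Finset.mem_filter.1 hj).2.2 (hb j).1
  · exact coe_mul_le_of_neg (Finset.mem_filter.1 hj).2.2 (hb j).2

lemma le_derivedUpper (c : Config V) {β : V → ℝ} (ht : c.SatTab β) (hb : c.InBounds β)
    (i : V) (hi : i ∈ c.basic) : (β i : EReal) ≤ c.derivedUpper i := by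
  rw [ht i hi, split_rowSum c i β, EReal.coe_add, ereal_coe_sum, ereal_coe_sum]
  unfold derivedUpper
  refine add_le_add (Finset.sum_le_sum fun j hj => ?_) (Finset.sum_le_sum fun j hj => ?_)
  · exact le_coe_mul_of_pos (Finset.mem_filter.1 hj).2.2 (hb j).2
  · exact le_coe_mul_of_neg (Finset.mem_filter.1 hj).2.2 (hb j).1

end Config

end Soundness2
section Soundness3

open Finset

variable {V : Type*} [Fintype V] [DecidableEq V]

lemma step_good {c : Config V} {ts : List (RConfig V)} (hs : Step c ts) {β : V → ℝ}
    (hg : c.Good β) :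
    ∃ s ∈ ts, s = RConfig.SAT ∨ ∃ c' : Config V, s = RConfig.node c' ∧ c'.Good β := by
  obtain ⟨hα, hβ, hb, hR⟩ := hg
  cases hs with
  | pivot1 i j hi hlo hj =>
      obtain ⟨hjb, hcases⟩ := hj
      have hT : c.T i j ≠ 0 := by
        rcases hcases with ⟨h, _⟩ | ⟨h, _⟩; exacts [ne_of_gt h, ne_of_lt h]
      exact ⟨_, List.mem_singleton_self _, Or.inr ⟨_, rfl,
        ⟨Config.pivot_satTab c hi hjb hT hα, Config.pivot_satTab c hi hjb hT hβ, hb, hR⟩⟩⟩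
  | pivot2 i j hi hhi hj =>
      obtain ⟨hjb, hcases⟩ := hj
      have hT : c.T i j ≠ 0 := by
        rcases hcases with ⟨h, _⟩ | ⟨h, _⟩; exacts [ne_of_lt h, ne_of_gt h]
      exact ⟨_, List.mem_singleton_self _, Or.inr ⟨_, rfl,
        ⟨Config.pivot_satTab c hi hjb hT hα, Config.pivot_satTab c hi hjb hT hβ, hb, hR⟩⟩⟩
  | update j δ hj hviol hlo hhi =>
      exact ⟨_, List.mem_singleton_self _, Or.inr ⟨_, rfl,
        ⟨Config.update_satTab c hj δ hα, hβ, hb, hR⟩⟩⟩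
  | failure i hi h =>
      exact (Config.failure_absurd c hα hβ hb i hi h).elim
  | updateB i j hRij hi hne hpos =>
      exact ⟨_, List.mem_singleton_self _, Or.inr ⟨_, rfl,
        ⟨Config.update_satTab c hi _ hα, hβ, hb, hR⟩⟩⟩
  | updateF i j hRij hj hne =>
      exact ⟨_, List.mem_singleton_self _, Or.inr ⟨_, rfl,
        ⟨Config.update_satTab c hj _ hα, hβ, hb, hR⟩⟩⟩
  | pivotForRelu i j hi hrel hj hT =>
      exact ⟨_, List.mem_singleton_self _, Or.inr ⟨_, rfl,
        ⟨Config.pivot_satTab c hi hj hT hα, Config.pivot_satTab c hi hj hT hβ, hb, hR⟩⟩⟩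
  | reluSplit i j hRij hl hu =>
      by_cases hbi : β i ≤ 0
      · refine ⟨_, List.mem_cons_self, Or.inr ⟨_, rfl, ⟨hα, hβ, ?_, hR⟩⟩⟩
        intro x
        refine ⟨(hb x).1, ?_⟩
        show (β x : EReal) ≤ (if x = i then (0 : EReal) else c.u x)
        by_cases hx : x = i
        · rw [if_pos hx, hx]; exact EReal.coe_nonpos.2 hbi
        · rw [if_neg hx]; exact (hb x).2
      · refine ⟨_, List.mem_cons_of_mem _ (List.mem_singleton_self _),
          Or.inr ⟨_, rfl, ⟨hα, hβ, ?_, hR⟩⟩⟩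
        intro x
        refine ⟨?_, (hb x).2⟩
        show (if x = i then (0 : EReal) else c.l x) ≤ (β x : EReal)
        by_cases hx : x = i
        · rw [if_pos hx, hx]; exact EReal.coe_nonneg.2 (le_of_not_ge hbi)
        · rw [if_neg hx]; exact (hb x).1
  | reluSuccess hbnd hrel =>
      exact ⟨_, List.mem_singleton_self _, Or.inl rfl⟩
  | deriveLowerBound i hi h =>
      refine ⟨_, List.mem_singleton_self _, Or.inr ⟨_, rfl, ⟨hα, hβ, ?_, hR⟩⟩⟩
      intro x
      refine ⟨?_, (hb x).2⟩
      show (if x = i then c.derivedLower i else c.l x) ≤ (β x : EReal)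
      by_cases hx : x = i
      · rw [if_pos hx, hx]; exact Config.derivedLower_le c hβ hb i hi
      · rw [if_neg hx]; exact (hb x).1
  | deriveUpperBound i hi h =>
      refine ⟨_, List.mem_singleton_self _, Or.inr ⟨_, rfl, ⟨hα, hβ, ?_, hR⟩⟩⟩
      intro x
      refine ⟨(hb x).1, ?_⟩
      show (β x : EReal) ≤ (if x = i then c.derivedUpper i else c.u x)
      by_cases hx : x = i
      · rw [if_pos hx, hx]; exact Config.le_derivedUpper c hβ hb i hi
      · rw [if_neg hx]; exact (hb x).2

/-- A leaf is acceptable if it is `SAT` or a node whose configuration still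
admits the fixed solution `β`. -/
def GoodLeaf (β : V → ℝ) (s : RConfig V) : Prop :=
  s = RConfig.SAT ∨ ∃ c : Config V, s = RConfig.node c ∧ c.Good β

lemma expand_preserve {β : V → ℝ} {t t' : DTree V} (he : Expand t t')
    (h : ∃ s, DTree.LeafMem s t ∧ GoodLeaf β s) :
    ∃ s, DTree.LeafMem s t' ∧ GoodLeaf β s := by
  induction he with
  | @here c ts hstep =>
      obtain ⟨s, hmem, hp⟩ := h
      cases hmem
      rcases hp with hp | ⟨c', heq, hgood⟩
      · exact absurd hp (by simp)
      · have hc : c = c' := by injection heq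
        subst hc
        obtain ⟨s', hs'mem, hs'p⟩ := step_good hstep hgood
        exact ⟨s', DTree.LeafMem.child (DTree.LeafMem.leaf s')
          (List.mem_map_of_mem (f := DTree.leaf) hs'mem), hs'p⟩
  | @child s0 pre post t t' hexp ih =>
      obtain ⟨s, hmem, hp⟩ := h
      cases hmem with
      | child hm htl =>
        rename_i t'' _
        rcases List.mem_append.1 htl with hpre | hrest
        · exact ⟨s, DTree.LeafMem.child hm (List.mem_append_left _ hpre), hp⟩
        · rcases List.mem_cons.1 hrest with heq | hpost
          · subst heq
            obtain ⟨s2, hm2, hp2⟩ := ih ⟨s, hm, hp⟩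
            exact ⟨s2, DTree.LeafMem.child hm2
              (List.mem_append_right _ List.mem_cons_self), hp2⟩
          · exact ⟨s, DTree.LeafMem.child hm
              (List.mem_append_right _ (List.mem_cons_of_mem _ hpost)), hp⟩

end Soundness3

lemma init_good {n : ℕ} (φ : Phi n) (β : Fin n → ℝ) (hsat : φ.Sat β) :
    (φ.init).Good (Sum.elim β fun a => ∑ j, (φ.lin.get a).coeff j * β j) := by
  set γ : Fin n ⊕ Fin φ.lin.length → ℝ :=
    Sum.elim β fun a => ∑ j, (φ.lin.get a).coeff j * β j with hγ
  have hrow : ∀ a : Fin φ.lin.length, ∀ δ : Fin n ⊕ Fin φ.lin.length → ℝ,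
      (φ.init).rowSum (Sum.inr a) δ
        = ∑ k : Fin n ⊕ Fin φ.lin.length, (φ.init).T (Sum.inr a) k * δ k := by
    intro a δ
    refine Finset.sum_subset (Finset.filter_subset _ _) fun k _ hk => ?_
    have hkb : k ∈ (φ.init).basic := by
      by_contra hc
      exact hk (Finset.mem_filter.2 ⟨Finset.mem_univ k, hc⟩)
    cases k with
    | inl j => simp [Phi.init] at hkb
    | inr b => show (φ.init).T (Sum.inr a) (Sum.inr b) * δ _ = 0; simp [Phi.init]
  refine ⟨?_, ?_, ?_, ?_⟩
  · -- SatTab of α = 0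
    intro r hr
    show (0 : ℝ) = (φ.init).rowSum r (φ.init).α
    unfold Config.rowSum
    rw [Finset.sum_congr rfl fun k _ => ?_]
    · exact (Finset.sum_const_zero).symm
    · show (φ.init).T r k * 0 = 0
      exact mul_zero _
  · -- SatTab of γ
    intro r hr
    cases r with
    | inl j => simp [Phi.init] at hr
    | inr a =>
      rw [hrow a γ, Fintype.sum_sum_type]
      have h1 : ∀ j : Fin n, (φ.init).T (Sum.inr a) (Sum.inl j) * γ (Sum.inl j)
          = (φ.lin.get a).coeff j * β j := by intro j; rfl
      have h2 : ∀ b : Fin φ.lin.length,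
          (φ.init).T (Sum.inr a) (Sum.inr b) * γ (Sum.inr b) = 0 := by
        intro b; show (0 : ℝ) * _ = 0; exact zero_mul _
      rw [Finset.sum_congr rfl fun j _ => h1 j, Finset.sum_congr rfl fun b _ => h2 b,
        Finset.sum_const_zero, add_zero]
      rfl
  · -- InBounds
    intro x
    cases x with
    | inl j =>
      constructor
      · show (if ∃ x, (x, j) ∈ φ.relu then (0 : EReal) else ⊥) ≤ (γ (Sum.inl j) : EReal)
        by_cases h : ∃ x, (x, j) ∈ φ.relu
        · rw [if_pos h]
          obtain ⟨x, hx⟩ := h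
          have := hsat.2 (x, j) hx
          refine EReal.coe_nonneg.2 ?_
          show (0 : ℝ) ≤ β j
          rw [this]
          exact le_max_left _ _
        · rw [if_neg h]; exact bot_le
      · exact le_top
    | inr a =>
      have hmem : φ.lin.get a ∈ φ.lin := List.get_mem φ.lin a
      have hh := hsat.1 _ hmem
      have hγa : γ (Sum.inr a) = ∑ j, (φ.lin.get a).coeff j * β j := rfl
      unfold LinAtom.Holds at hh
      rcases hrel : (φ.lin.get a).rel with _ | _ | _ <;>
        rw [hrel] at hh <;>
        constructor <;>
        simp only [Phi.init, hrel] <;>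
        rw [hγa] <;>
        first
          | exact le_top
          | exact bot_le
          | exact le_of_eq (congrArg _ hh.symm)
          | exact le_of_eq (congrArg _ hh)
          | exact EReal.coe_le_coe_iff.2 hh
  · -- ReLU constraints
    intro p hp
    obtain ⟨q, hq, rfl⟩ := Finset.mem_image.1 hp
    show γ (Sum.inl q.2) = max 0 (γ (Sum.inl q.1))
    exact hsat.2 q hq

/-- soundness of Reluplex, unsatisfiable case. If there is a
refutation from `φ` — a derivation from the initial configuration of `φ` ending in
a tree all of whose leaves are `UNSAT` — then `φ` is unsatisfiable. -/
theorem reluplex_sound_unsat {n : ℕ} (φ : Phi n)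
    (m : ℕ) (D : ℕ → DTree (Fin n ⊕ Fin φ.lin.length))
    (hD : IsDerivation φ.init m D)
    (href : ∀ s, DTree.LeafMem s (D m) → s = RConfig.UNSAT) :
    ¬ φ.Satisfiable := by
  rintro ⟨β, hsat⟩
  have h0 := init_good φ β hsat
  set γ : Fin n ⊕ Fin φ.lin.length → ℝ :=
    Sum.elim β fun a => ∑ j, (φ.lin.get a).coeff j * β j with hγ
  have key : ∀ k, k ≤ m → ∃ s, DTree.LeafMem s (D k) ∧ GoodLeaf γ s := by
    intro k
    induction k with
    | zero =>
      intro _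
      rw [hD.1]
      exact ⟨_, DTree.LeafMem.leaf _, Or.inr ⟨_, rfl, h0⟩⟩
    | succ k ih =>
      intro hk
      exact expand_preserve (hD.2 k (Nat.lt_of_succ_le hk)) (ih (Nat.le_of_succ_le hk))
  obtain ⟨s, hmem, hp⟩ := key m le_rfl
  have hs := href s hmem
  subst hs
  rcases hp with h | ⟨c', h, _⟩ <;> simp at h
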